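/- arXiv:1510.06895 — 3 statements merged into one kernel-verified Lean document; each statement's English description precedes it below -/
import Mathlib

section
/- Let A₁, …, Aₘ be matrices with Aᵢ ∈ ℝ^{d × nᵢ}, b ∈ ℝ^d, and define f(x₁,…,xₘ) = (1/2)‖Σᵢ Aᵢxᵢ - b‖². Then for all x = (x₁,…,xₘ) and y = (y₁,…,yₘ): |f(x) - f(y) - Σᵢ ⟨∇ᵢf(y), xᵢ - yᵢ⟩| ≤ Σᵢ (m‖Aᵢ‖₂²/2)‖xᵢ - yᵢ‖², where ‖Aᵢ‖₂ is the spectral norm and ∇ᵢf denotes the partial gradient with respect to xᵢ. -/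
open RealInnerProductSpace

/-- The multi-block quadratic `f(x₁,…,xₘ) = (1/2)‖Σᵢ Aᵢxᵢ - b‖²` satisfies the
multi-block Lipschitz-gradient inequality with constants `Lᵢ = m‖Aᵢ‖²`, where
`∇ᵢf(y) = Aᵢ* (Σⱼ Aⱼyⱼ - b)` is the partial gradient and `‖Aᵢ‖` the operator
(spectral) norm. -/
theorem multiblock_quadratic_lipschitz (m d : ℕ) (n : Fin m → ℕ)
    (A : ∀ i : Fin m, EuclideanSpace ℝ (Fin (n i)) →L[ℝ] EuclideanSpace ℝ (Fin d))
    (b : EuclideanSpace ℝ (Fin d))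
    (f : (∀ i : Fin m, EuclideanSpace ℝ (Fin (n i))) → ℝ)
    (hf : ∀ x, f x = (1 / 2) * ‖(∑ i, A i (x i)) - b‖ ^ 2)
    (x y : ∀ i : Fin m, EuclideanSpace ℝ (Fin (n i))) :
    |f x - f y - ∑ i, ⟪(A i).adjoint ((∑ j, A j (y j)) - b), x i - y i⟫| ≤
      ∑ i, (m * ‖A i‖ ^ 2 / 2) * ‖x i - y i‖ ^ 2 := by
  set u := ∑ i, A i (x i) with hu
  set v := ∑ j, A j (y j) with hv
  have huv : u - v = ∑ i, A i (x i - y i) := by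
    simp [hu, hv, map_sub, Finset.sum_sub_distrib]
  have hgrad : ∑ i, ⟪(A i).adjoint (v - b), x i - y i⟫ = ⟪v - b, u - v⟫ := by
    rw [huv, inner_sum]
    exact Finset.sum_congr rfl fun i _ => ContinuousLinearMap.adjoint_inner_left _ _ _
  have hlhs : f x - f y - ∑ i, ⟪(A i).adjoint (v - b), x i - y i⟫
      = (1 / 2) * ‖u - v‖ ^ 2 := by
    rw [hgrad, hf, hf]
    have h1 : u - b = (v - b) + (u - v) := by abel
    rw [← hu, ← hv, h1, norm_add_sq_real]
    ring
  rw [hlhs]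
  have hn : ‖u - v‖ ≤ ∑ i, ‖A i‖ * ‖x i - y i‖ := by
    rw [huv]
    refine (norm_sum_le _ _).trans (Finset.sum_le_sum fun i _ => ?_)
    exact ContinuousLinearMap.le_opNorm _ _
  have h2 : ‖u - v‖ ^ 2 ≤ (∑ i, ‖A i‖ * ‖x i - y i‖) ^ 2 := by
    apply pow_le_pow_left₀ (norm_nonneg _) hn
  have h3 : ((∑ i, ‖A i‖ * ‖x i - y i‖) ^ 2 : ℝ)
      ≤ m * ∑ i, (‖A i‖ * ‖x i - y i‖) ^ 2 := by
    have := sq_sum_le_card_mul_sum_sq (s := (Finset.univ : Finset (Fin m)))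
      (f := fun i => ‖A i‖ * ‖x i - y i‖)
    simpa using this
  have habs : |(1 / 2 : ℝ) * ‖u - v‖ ^ 2| = (1 / 2) * ‖u - v‖ ^ 2 := by
    rw [abs_of_nonneg]; positivity
  rw [habs]
  calc (1 / 2 : ℝ) * ‖u - v‖ ^ 2 ≤ (1 / 2) * (m * ∑ i, (‖A i‖ * ‖x i - y i‖) ^ 2) := by
        nlinarith
    _ = ∑ i, (m * ‖A i‖ ^ 2 / 2) * ‖x i - y i‖ ^ 2 := by
        rw [Finset.mul_sum, Finset.mul_sum]
        exact Finset.sum_congr rfl fun i _ => by ring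
end

section
/- Fix a concave monotonically increasing g: [0,∞) → [0,∞), supergradients wᵢᵏ of g at σᵢ(Xᵏ), μ > L, and f: ℝ^{m×n} → ℝ with L-Lipschitz gradient. If X^{k+1} minimizes the function X ↦ Σᵢ wᵢᵏ σᵢ(X) + (μ/2)‖X - (Xᵏ - (1/μ)∇f(Xᵏ))‖_F², then F(X^{k+1}) ≤ F(Xᵏ) - ((μ - L)/2)‖Xᵏ - X^{k+1}‖_F², where F(X) = Σᵢ g(σᵢ(X)) + f(X). In particular F(Xᵏ) is monotonically nonincreasing along IRNN iterations. -/
attribute [local instance] Matrix.frobeniusNormedAddCommGroup Matrix.frobeniusNormedSpace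

/-- The `i`-th singular value of a real `m × n` matrix: the square root of the `i`-th
eigenvalue of the positive semidefinite Hermitian matrix `X Xᵀ`. -/
noncomputable def sval {m n : ℕ} (X : Matrix (Fin m) (Fin n) ℝ) (i : Fin m) : ℝ :=
  Real.sqrt ((Matrix.isHermitian_mul_conjTranspose_self X).eigenvalues i)

/-- The Frobenius inner product of two matrices. -/
def finner {m n : ℕ} (X Y : Matrix (Fin m) (Fin n) ℝ) : ℝ :=
  ∑ i, ∑ j, X i j * Y i j

namespace IRNNaux
variable {m n : ℕ}

lemma fnorm_eq (A : Matrix (Fin m) (Fin n) ℝ) :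
    ‖A‖ = Real.sqrt (∑ i, ∑ j, A i j ^ 2) := by
  rw [Matrix.frobenius_norm_def, Real.sqrt_eq_rpow]
  norm_num [Real.rpow_natCast]

lemma fnorm_sq (A : Matrix (Fin m) (Fin n) ℝ) : ‖A‖ ^ 2 = finner A A := by
  rw [fnorm_eq, Real.sq_sqrt (by positivity)]
  simp [finner, sq]

lemma finner_le (X Y : Matrix (Fin m) (Fin n) ℝ) : finner X Y ≤ ‖X‖ * ‖Y‖ := by
  rw [fnorm_eq, fnorm_eq]
  have := Real.sum_mul_le_sqrt_mul_sqrt (Finset.univ : Finset (Fin m × Fin n))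
    (fun p => X p.1 p.2) (fun p => Y p.1 p.2)
  simpa [finner, Fintype.sum_prod_type] using this

lemma finner_add_left (A B C : Matrix (Fin m) (Fin n) ℝ) :
    finner (A + B) C = finner A C + finner B C := by
  simp [finner, Matrix.add_apply, add_mul, Finset.sum_add_distrib]

lemma finner_sub_left (A B C : Matrix (Fin m) (Fin n) ℝ) :
    finner (A - B) C = finner A C - finner B C := by
  simp [finner, Matrix.sub_apply, sub_mul, Finset.sum_sub_distrib]

lemma finner_comm (A B : Matrix (Fin m) (Fin n) ℝ) : finner A B = finner B A := by
  simp [finner, mul_comm]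

lemma finner_smul_left (c : ℝ) (A B : Matrix (Fin m) (Fin n) ℝ) :
    finner (c • A) B = c * finner A B := by
  simp [finner, Matrix.smul_apply, smul_eq_mul, mul_assoc, Finset.mul_sum]

lemma abs_finner_le (A B : Matrix (Fin m) (Fin n) ℝ) : |finner A B| ≤ ‖A‖ * ‖B‖ := by
  rcases abs_cases (finner A B) with ⟨h, _⟩ | ⟨h, _⟩
  · rw [h]; exact finner_le A B
  · rw [h]
    have : -finner A B = finner (-A) B := by
      have := finner_smul_left (-1 : ℝ) A B
      simpa using this.symm
    rw [this]
    simpa using finner_le (-A) B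

lemma expand (A B : Matrix (Fin m) (Fin n) ℝ) :
    ‖A + B‖ ^ 2 = ‖A‖ ^ 2 + 2 * finner A B + ‖B‖ ^ 2 := by
  rw [fnorm_sq, fnorm_sq, fnorm_sq, finner_add_left, finner_comm A (A + B),
    finner_comm B (A + B), finner_add_left, finner_add_left, finner_comm B A]
  ring

lemma descent (f : Matrix (Fin m) (Fin n) ℝ → ℝ)
    (G : Matrix (Fin m) (Fin n) ℝ → Matrix (Fin m) (Fin n) ℝ)
    (hG : ∀ X, ∃ D : Matrix (Fin m) (Fin n) ℝ →L[ℝ] ℝ,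
      (∀ H, D H = finner (G X) H) ∧ HasFDerivAt f D X)
    (L : ℝ) (hL : 0 ≤ L)
    (hlip : ∀ X Y, ‖G X - G Y‖ ≤ L * ‖X - Y‖)
    (X Y : Matrix (Fin m) (Fin n) ℝ) :
    f Y ≤ f X + finner (G X) (Y - X) + L / 2 * ‖Y - X‖ ^ 2 := by
  set H := Y - X with hH
  have hline : ∀ t : ℝ, HasDerivAt (fun t : ℝ => X + t • H) H t := by
    intro t
    have h := ((hasDerivAt_id t).smul_const H).const_add X
    simp only [one_smul, id_eq] at h
    exact h
  set φd : ℝ → ℝ := fun t => finner (G (X + t • H)) H with hφd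
  have hderiv : ∀ t : ℝ, HasDerivAt (fun t : ℝ => f (X + t • H)) (φd t) t := by
    intro t
    obtain ⟨D, hD1, hD2⟩ := hG (X + t • H)
    have := hD2.comp_hasDerivAt t (hline t)
    refine HasDerivAt.congr_deriv this ?_
    exact hD1 H
  have hcont : Continuous φd := by
    have : LipschitzWith (Real.toNNReal (L * ‖H‖ * ‖H‖)) φd := by
      apply LipschitzWith.of_dist_le_mul
      intro s t
      rw [Real.dist_eq, Real.dist_eq]
      have h1 : φd s - φd t = finner (G (X + s • H) - G (X + t • H)) H :=
        (finner_sub_left _ _ _).symm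
      have h2 := abs_finner_le (G (X + s • H) - G (X + t • H)) H
      have h3 : ‖G (X + s • H) - G (X + t • H)‖ ≤ L * (|s - t| * ‖H‖) := by
        have := hlip (X + s • H) (X + t • H)
        have e : (X + s • H) - (X + t • H) = (s - t) • H := by
          rw [sub_smul]; abel
        rw [e, norm_smul, Real.norm_eq_abs] at this
        exact this
      rw [Real.coe_toNNReal _ (by positivity)]
      calc |φd s - φd t| ≤ ‖G (X + s • H) - G (X + t • H)‖ * ‖H‖ := by rw [h1]; exact h2
        _ ≤ (L * (|s - t| * ‖H‖)) * ‖H‖ := by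
            apply mul_le_mul_of_nonneg_right h3 (norm_nonneg _)
        _ = L * ‖H‖ * ‖H‖ * |s - t| := by ring
    exact this.continuous
  have hFTC : f Y - f X = ∫ t in (0:ℝ)..1, φd t := by
    have h := intervalIntegral.integral_eq_sub_of_hasDerivAt
      (f := fun t : ℝ => f (X + t • H)) (fun t _ => hderiv t)
      (hcont.intervalIntegrable 0 1)
    have e1 : X + (1:ℝ) • H = Y := by rw [one_smul, hH]; abel
    have e0 : X + (0:ℝ) • H = X := by rw [zero_smul, add_zero]
    rw [e1, e0] at h
    exact h.symm
  have hbound : ∀ t ∈ Set.Icc (0:ℝ) 1, φd t ≤ finner (G X) H + L * ‖H‖ ^ 2 * t := by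
    intro t ht
    have h1 : φd t - finner (G X) H = finner (G (X + t • H) - G X) H :=
      (finner_sub_left _ _ _).symm
    have h2 : finner (G (X + t • H) - G X) H ≤ ‖G (X + t • H) - G X‖ * ‖H‖ := finner_le _ _
    have h3 : ‖G (X + t • H) - G X‖ ≤ L * (t * ‖H‖) := by
      have := hlip (X + t • H) X
      have e : (X + t • H) - X = t • H := add_sub_cancel_left X (t • H)
      rw [e, norm_smul, Real.norm_eq_abs, abs_of_nonneg ht.1] at this
      exact this
    nlinarith [norm_nonneg H, mul_le_mul_of_nonneg_right h3 (norm_nonneg H)]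
  have i2 : IntervalIntegrable (fun t : ℝ => L * ‖H‖ ^ 2 * t) MeasureTheory.volume 0 1 := by
    apply Continuous.intervalIntegrable; fun_prop
  have i3 : IntervalIntegrable (fun t : ℝ => finner (G X) H + L * ‖H‖ ^ 2 * t)
      MeasureTheory.volume 0 1 := by
    apply Continuous.intervalIntegrable; fun_prop
  have hint : (∫ t in (0:ℝ)..1, φd t) ≤
      ∫ t in (0:ℝ)..1, (finner (G X) H + L * ‖H‖ ^ 2 * t) := by
    apply intervalIntegral.integral_mono_on zero_le_one (hcont.intervalIntegrable 0 1) i3 hbound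
  have hval : (∫ t in (0:ℝ)..1, (finner (G X) H + L * ‖H‖ ^ 2 * t))
      = finner (G X) H + L / 2 * ‖H‖ ^ 2 := by
    rw [intervalIntegral.integral_add intervalIntegrable_const i2,
      intervalIntegral.integral_const_mul, integral_id]
    norm_num
    ring
  rw [hval] at hint
  linarith [hFTC ▸ hint]

end IRNNaux

/-- IRNN descent property (single block): if `g` is concave and monotonically increasing
on `[0,∞)`, `∇f` is `L`-Lipschitz (w.r.t. the Frobenius norm), `μ > L`, the `wᵢ` are
supergradients of `g` at the singular values of `Xᵏ`, and `X^{k+1}` minimizes the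
weighted-nuclear-norm proximal subproblem, then
`F(X^{k+1}) ≤ F(Xᵏ) - ((μ-L)/2)‖Xᵏ - X^{k+1}‖_F²` where `F(X) = Σᵢ g(σᵢ(X)) + f(X)`. -/
theorem irnn_descent (m n : ℕ) (hmn : m ≤ n)
    (g : ℝ → ℝ) (hg : ConcaveOn ℝ (Set.Ici 0) g) (hmono : MonotoneOn g (Set.Ici 0))
    (hg0 : ∀ s, 0 ≤ s → 0 ≤ g s)
    (f : Matrix (Fin m) (Fin n) ℝ → ℝ) (G : Matrix (Fin m) (Fin n) ℝ → Matrix (Fin m) (Fin n) ℝ)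
    (hG : ∀ X, ∃ D : Matrix (Fin m) (Fin n) ℝ →L[ℝ] ℝ,
      (∀ H, D H = finner (G X) H) ∧ HasFDerivAt f D X)
    (L μ : ℝ) (hL : 0 < L) (hμ : L < μ)
    (hlip : ∀ X Y, ‖G X - G Y‖ ≤ L * ‖X - Y‖)
    (Xk Xk1 : Matrix (Fin m) (Fin n) ℝ) (w : Fin m → ℝ)
    (hw : ∀ i, ∀ s, 0 ≤ s → g s ≤ g (sval Xk i) + w i * (s - sval Xk i))
    (hmin : ∀ Y : Matrix (Fin m) (Fin n) ℝ,
      (∑ i, w i * sval Xk1 i) + μ / 2 * ‖Xk1 - (Xk - (1 / μ) • G Xk)‖ ^ 2 ≤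
        (∑ i, w i * sval Y i) + μ / 2 * ‖Y - (Xk - (1 / μ) • G Xk)‖ ^ 2) :
    (∑ i, g (sval Xk1 i)) + f Xk1 ≤
      ((∑ i, g (sval Xk i)) + f Xk) - (μ - L) / 2 * ‖Xk - Xk1‖ ^ 2 := by
  have hμ0 : (0:ℝ) < μ := hL.trans hμ
  set H := Xk1 - Xk with hH
  -- Step 1: from the minimization property
  have key1 : (∑ i, w i * sval Xk1 i) + μ / 2 * ‖H‖ ^ 2 + finner (G Xk) H ≤
      ∑ i, w i * sval Xk i := by
    have h := hmin Xk
    have e1 : Xk1 - (Xk - (1 / μ) • G Xk) = H + (1 / μ) • G Xk := by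
      rw [hH]; abel
    have e2 : Xk - (Xk - (1 / μ) • G Xk) = (1 / μ) • G Xk := sub_sub_cancel _ _
    rw [e1, e2, IRNNaux.expand] at h
    have e3 : finner H ((1 / μ) • G Xk) = (1 / μ) * finner (G Xk) H := by
      rw [IRNNaux.finner_comm, IRNNaux.finner_smul_left]
    rw [e3] at h
    have e4 : μ / 2 * (‖H‖ ^ 2 + 2 * ((1 / μ) * finner (G Xk) H) + ‖(1 / μ) • G Xk‖ ^ 2)
        = μ / 2 * ‖H‖ ^ 2 + finner (G Xk) H + μ / 2 * ‖(1 / μ) • G Xk‖ ^ 2 := by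
      field_simp
    rw [e4] at h
    linarith
  -- Step 2: supergradient property
  have key2 : (∑ i, g (sval Xk1 i)) - (∑ i, g (sval Xk i)) ≤
      (∑ i, w i * sval Xk1 i) - (∑ i, w i * sval Xk i) := by
    have h : ∀ i ∈ (Finset.univ : Finset (Fin m)),
        g (sval Xk1 i) - g (sval Xk i) ≤ w i * sval Xk1 i - w i * sval Xk i := by
      intro i _
      have := hw i (sval Xk1 i) (Real.sqrt_nonneg _)
      nlinarith [this]
    calc (∑ i, g (sval Xk1 i)) - (∑ i, g (sval Xk i))
        = ∑ i, (g (sval Xk1 i) - g (sval Xk i)) := by rw [Finset.sum_sub_distrib]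
      _ ≤ ∑ i, (w i * sval Xk1 i - w i * sval Xk i) := Finset.sum_le_sum h
      _ = (∑ i, w i * sval Xk1 i) - (∑ i, w i * sval Xk i) := by rw [Finset.sum_sub_distrib]
  -- Step 3: descent lemma
  have key3 := IRNNaux.descent f G hG L hL.le hlip Xk Xk1
  rw [← hH] at key3
  have hnorm : ‖Xk - Xk1‖ = ‖H‖ := by rw [hH, norm_sub_rev]
  rw [hnorm]
  linarith
end

section
/- Under the hypotheses of the IRNN descent property (g concave increasing, ∇f L-Lipschitz, μ > L, each iterate X^{k+1} minimizing the weighted-nuclear-norm proximal subproblem), the differences satisfy Σ_{k=1}^∞ ‖Xᵏ - X^{k+1}‖_F² ≤ (2/(μ - L)) F(X¹) when F ≥ 0; in particular ‖Xᵏ - X^{k+1}‖_F → 0 as k → ∞. -/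
attribute [local instance] Matrix.frobeniusNormedAddCommGroup Matrix.frobeniusNormedSpace

section Helpers

variable {m n : ℕ}

lemma sval_nonneg (X : Matrix (Fin m) (Fin n) ℝ) (i : Fin m) : 0 ≤ sval X i :=
  Real.sqrt_nonneg _

lemma finner_self (A : Matrix (Fin m) (Fin n) ℝ) : finner A A = ‖A‖^2 := by
  rw [Matrix.frobenius_norm_def, ← Real.sqrt_eq_rpow, Real.sq_sqrt]
  · simp [finner, sq, Real.norm_eq_abs, abs_mul_abs_self]
  · positivity

lemma finner_comm (A B : Matrix (Fin m) (Fin n) ℝ) : finner A B = finner B A := by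
  simp [finner, mul_comm]

lemma finner_sub_left (A B C : Matrix (Fin m) (Fin n) ℝ) :
    finner (A - B) C = finner A C - finner B C := by
  simp [finner, Matrix.sub_apply, sub_mul, Finset.sum_sub_distrib]

lemma finner_add_left (A B C : Matrix (Fin m) (Fin n) ℝ) :
    finner (A + B) C = finner A C + finner B C := by
  simp [finner, Matrix.add_apply, add_mul, Finset.sum_add_distrib]

lemma finner_smul_left (c : ℝ) (A B : Matrix (Fin m) (Fin n) ℝ) :
    finner (c • A) B = c * finner A B := by
  simp only [finner, Matrix.smul_apply, smul_eq_mul, Finset.mul_sum]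
  exact Finset.sum_congr rfl fun i _ => Finset.sum_congr rfl fun j _ => by ring

lemma finner_smul_right (c : ℝ) (A B : Matrix (Fin m) (Fin n) ℝ) :
    finner A (c • B) = c * finner A B := by
  rw [finner_comm, finner_smul_left, finner_comm]

lemma norm_add_sq' (A B : Matrix (Fin m) (Fin n) ℝ) :
    ‖A + B‖^2 = ‖A‖^2 + 2 * finner A B + ‖B‖^2 := by
  rw [← finner_self, ← finner_self, ← finner_self]
  simp only [finner, Matrix.add_apply]
  rw [Finset.sum_congr rfl fun i _ => Finset.sum_congr rfl fun j _ =>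
    (by ring : (A i j + B i j) * (A i j + B i j)
      = A i j * A i j + 2 * (A i j * B i j) + B i j * B i j)]
  simp [Finset.sum_add_distrib, Finset.mul_sum]

lemma finner_le (A B : Matrix (Fin m) (Fin n) ℝ) : finner A B ≤ ‖A‖ * ‖B‖ := by
  have h2 : (finner A B)^2 ≤ ‖A‖^2 * ‖B‖^2 := by
    rw [← finner_self, ← finner_self]
    have := Finset.sum_mul_sq_le_sq_mul_sq (Finset.univ : Finset (Fin m × Fin n))
      (fun p => A p.1 p.2) (fun p => B p.1 p.2)
    simpa [finner, sq, Fintype.sum_prod_type] using this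
  calc finner A B ≤ |finner A B| := le_abs_self _
    _ = Real.sqrt ((finner A B)^2) := (Real.sqrt_sq_eq_abs _).symm
    _ ≤ Real.sqrt (‖A‖^2 * ‖B‖^2) := Real.sqrt_le_sqrt h2
    _ = ‖A‖ * ‖B‖ := by rw [← mul_pow, Real.sqrt_sq (by positivity)]

lemma descent_lemma (f : Matrix (Fin m) (Fin n) ℝ → ℝ)
    (G : Matrix (Fin m) (Fin n) ℝ → Matrix (Fin m) (Fin n) ℝ)
    (hG : ∀ X, ∃ D : Matrix (Fin m) (Fin n) ℝ →L[ℝ] ℝ,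
      (∀ H, D H = finner (G X) H) ∧ HasFDerivAt f D X)
    (L : ℝ) (hL : 0 ≤ L) (hlip : ∀ X Y, ‖G X - G Y‖ ≤ L * ‖X - Y‖)
    (P Q : Matrix (Fin m) (Fin n) ℝ) :
    f Q ≤ f P + finner (G P) (Q - P) + L / 2 * ‖Q - P‖ ^ 2 := by
  set E := Q - P with hE
  have hcurve : ∀ t : ℝ, HasDerivAt (fun t : ℝ => P + t • E) E t := fun t => by
    have h := ((hasDerivAt_id' t).smul_const E).const_add P
    rw [one_smul] at h
    exact h
  have hφ : ∀ t : ℝ, HasDerivAt (fun t : ℝ => f (P + t • E))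
      (finner (G (P + t • E)) E) t := fun t => by
    obtain ⟨D, hD, hf'⟩ := hG (P + t • E)
    have := hf'.comp_hasDerivAt t (hcurve t)
    rw [← hD]
    exact this
  have hGlip : LipschitzWith (Real.toNNReal L) G := by
    apply LipschitzWith.of_dist_le_mul
    intro x y
    rw [dist_eq_norm, dist_eq_norm, Real.coe_toNNReal L hL]
    exact hlip x y
  have hGcont : Continuous G := hGlip.continuous
  have hTcont : Continuous (fun A : Matrix (Fin m) (Fin n) ℝ => finner A E) := by
    exact LinearMap.continuous_of_finiteDimensional
      { toFun := fun A => finner A E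
        map_add' := fun A B => finner_add_left A B E
        map_smul' := fun c A => finner_smul_left c A E }
  have hcont : Continuous (fun t : ℝ => finner (G (P + t • E)) E) := by
    exact hTcont.comp (hGcont.comp (by continuity))
  have key : f Q - f P = ∫ t in (0:ℝ)..1, finner (G (P + t • E)) E := by
    have := intervalIntegral.integral_eq_sub_of_hasDerivAt
      (f := fun t : ℝ => f (P + t • E)) (f' := fun t => finner (G (P + t • E)) E)
      (fun t _ => hφ t) (hcont.intervalIntegrable 0 1)
    rw [this]
    norm_num [hE]
  have hcont2 : Continuous (fun t : ℝ => finner (G P) E + L * ‖E‖ ^ 2 * t) := by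
    continuity
  have bound : (∫ t in (0:ℝ)..1, finner (G (P + t • E)) E) ≤
      ∫ t in (0:ℝ)..1, (finner (G P) E + L * ‖E‖ ^ 2 * t) := by
    apply intervalIntegral.integral_mono_on (by norm_num)
      (hcont.intervalIntegrable 0 1) (hcont2.intervalIntegrable 0 1)
    intro t ht
    obtain ⟨ht0, ht1⟩ := Set.mem_Icc.mp ht
    have h1 : finner (G (P + t • E)) E - finner (G P) E
        = finner (G (P + t • E) - G P) E := (finner_sub_left _ _ _).symm
    have h3 : finner (G (P + t • E) - G P) E ≤ ‖G (P + t • E) - G P‖ * ‖E‖ :=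
      finner_le _ _
    have h4 : ‖G (P + t • E) - G P‖ ≤ L * (t * ‖E‖) := by
      have := hlip (P + t • E) P
      simpa [norm_smul, abs_of_nonneg ht0] using this
    have h5 : ‖G (P + t • E) - G P‖ * ‖E‖ ≤ L * (t * ‖E‖) * ‖E‖ :=
      mul_le_mul_of_nonneg_right h4 (norm_nonneg _)
    nlinarith [norm_nonneg E]
  have hval : (∫ t in (0:ℝ)..1, (finner (G P) E + L * ‖E‖ ^ 2 * t))
      = finner (G P) E + L / 2 * ‖E‖ ^ 2 := by
    rw [intervalIntegral.integral_add (intervalIntegrable_const)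
      ((by fun_prop : Continuous fun t : ℝ => L * ‖E‖ ^ 2 * t).intervalIntegrable 0 1),
      intervalIntegral.integral_const_mul]
    simp [integral_id]
    ring
  linarith [key, bound, hval.le, hval.ge]

end Helpers

/-- Summability of the successive differences of IRNN iterates: under the hypotheses of
the IRNN descent property and nonnegativity of `F`, one has
`Σ_{k=1}^∞ ‖Xᵏ - X^{k+1}‖_F² ≤ (2/(μ-L)) F(X¹)`, and in particular
`‖Xᵏ - X^{k+1}‖_F → 0`. -/
theorem irnn_diff_tendsto_zero (m n : ℕ) (hmn : m ≤ n)
    (g : ℝ → ℝ) (hg : ConcaveOn ℝ (Set.Ici 0) g) (hmono : MonotoneOn g (Set.Ici 0))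
    (hg0 : ∀ s, 0 ≤ s → 0 ≤ g s)
    (f : Matrix (Fin m) (Fin n) ℝ → ℝ) (hf0 : ∀ X, 0 ≤ f X)
    (G : Matrix (Fin m) (Fin n) ℝ → Matrix (Fin m) (Fin n) ℝ)
    (hG : ∀ X, ∃ D : Matrix (Fin m) (Fin n) ℝ →L[ℝ] ℝ,
      (∀ H, D H = finner (G X) H) ∧ HasFDerivAt f D X)
    (L μ : ℝ) (hL : 0 < L) (hμ : L < μ)
    (hlip : ∀ X Y, ‖G X - G Y‖ ≤ L * ‖X - Y‖)
    (X : ℕ → Matrix (Fin m) (Fin n) ℝ) (w : ℕ → Fin m → ℝ)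
    (hw : ∀ k i, ∀ s, 0 ≤ s → g s ≤ g (sval (X k) i) + w k i * (s - sval (X k) i))
    (hmin : ∀ k, ∀ Y : Matrix (Fin m) (Fin n) ℝ,
      (∑ i, w k i * sval (X (k + 1)) i) +
          μ / 2 * ‖X (k + 1) - (X k - (1 / μ) • G (X k))‖ ^ 2 ≤
        (∑ i, w k i * sval Y i) + μ / 2 * ‖Y - (X k - (1 / μ) • G (X k))‖ ^ 2) :
    (∑' k : ℕ, ‖X (k + 1) - X (k + 2)‖ ^ 2) ≤
        2 / (μ - L) * ((∑ i, g (sval (X 1) i)) + f (X 1)) ∧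
      Filter.Tendsto (fun k => ‖X k - X (k + 1)‖) Filter.atTop (nhds 0) := by
  have hμ0 : 0 < μ := hL.trans hμ
  have hμL : 0 < μ - L := sub_pos.mpr hμ
  set FF : Matrix (Fin m) (Fin n) ℝ → ℝ := fun Y => (∑ i, g (sval Y i)) + f Y with hFF
  have hFF0 : ∀ Y, 0 ≤ FF Y := fun Y =>
    add_nonneg (Finset.sum_nonneg fun i _ => hg0 _ (sval_nonneg Y i)) (hf0 Y)
  -- the descent property
  have hdesc : ∀ k, (μ - L) / 2 * ‖X (k+1) - X k‖ ^ 2 ≤ FF (X k) - FF (X (k+1)) := by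
    intro k
    set P := X k with hP
    set Q := X (k+1) with hQ
    set E := Q - P with hEdef
    set g0 := G P with hg0def
    -- step (a): from minimality at Y = P
    have ha : (∑ i, w k i * sval Q i) - (∑ i, w k i * sval P i)
        ≤ -(μ / 2) * ‖E‖ ^ 2 - finner E g0 := by
      have hm := hmin k P
      have e1 : Q - (P - (1 / μ) • g0) = E + (1 / μ) • g0 := by
        rw [hEdef]; abel
      have e2 : P - (P - (1 / μ) • g0) = (1 / μ) • g0 := by abel
      rw [e1, e2, norm_add_sq', finner_smul_right] at hm
      have hc : μ / 2 * (2 * ((1 / μ) * finner E g0)) = finner E g0 := by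
        field_simp
      nlinarith [hm]
    -- step (b): concavity / supergradient property
    have hb : (∑ i, g (sval Q i)) ≤
        (∑ i, g (sval P i)) + ((∑ i, w k i * sval Q i) - (∑ i, w k i * sval P i)) := by
      have : ∀ i : Fin m, g (sval Q i) ≤ g (sval P i) + w k i * (sval Q i - sval P i) :=
        fun i => hw k i (sval Q i) (sval_nonneg Q i)
      have hsum := Finset.sum_le_sum (fun i (_ : i ∈ Finset.univ) => this i)
      calc (∑ i, g (sval Q i))
          ≤ ∑ i, (g (sval P i) + w k i * (sval Q i - sval P i)) := hsum
        _ = (∑ i, g (sval P i)) + ((∑ i, w k i * sval Q i) - (∑ i, w k i * sval P i)) := by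
            simp [Finset.sum_add_distrib, mul_sub, Finset.sum_sub_distrib]
    -- step (c): Lipschitz gradient descent lemma
    have hc : f Q ≤ f P + finner g0 E + L / 2 * ‖E‖ ^ 2 :=
      descent_lemma f G hG L hL.le hlip P Q
    have hcomm : finner g0 E = finner E g0 := finner_comm _ _
    have : FF Q + (μ - L) / 2 * ‖E‖ ^ 2 ≤ FF P := by
      simp only [hFF]
      nlinarith [ha, hb, hc]
    linarith [this]
  -- partial sum bound
  have hpartial : ∀ N : ℕ, (∑ k ∈ Finset.range N, ‖X (k + 1) - X (k + 2)‖ ^ 2)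
      ≤ 2 / (μ - L) * FF (X 1) := by
    intro N
    have h1 : (∑ k ∈ Finset.range N, (μ - L) / 2 * ‖X (k + 2) - X (k + 1)‖ ^ 2)
        ≤ ∑ k ∈ Finset.range N, (FF (X (k + 1)) - FF (X (k + 2))) :=
      Finset.sum_le_sum fun k _ => hdesc (k + 1)
    have h2 : (∑ k ∈ Finset.range N, (FF (X (k + 1)) - FF (X (k + 2))))
        = FF (X 1) - FF (X (N + 1)) := by
      have := Finset.sum_range_sub' (fun k => FF (X (k + 1))) N
      simpa using this
    have h3 : (∑ k ∈ Finset.range N, (μ - L) / 2 * ‖X (k + 2) - X (k + 1)‖ ^ 2)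
        = (μ - L) / 2 * ∑ k ∈ Finset.range N, ‖X (k + 1) - X (k + 2)‖ ^ 2 := by
      rw [Finset.mul_sum]
      exact Finset.sum_congr rfl fun k _ => by rw [norm_sub_rev]
    have h4 : (μ - L) / 2 * (∑ k ∈ Finset.range N, ‖X (k + 1) - X (k + 2)‖ ^ 2)
        ≤ FF (X 1) := by
      rw [← h3]
      exact h1.trans (h2.le.trans (by linarith [hFF0 (X (N + 1))]))
    rw [div_mul_eq_mul_div, le_div_iff₀ hμL]
    have h5 := mul_le_mul_of_nonneg_left h4 (by norm_num : (0:ℝ) ≤ 2)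
    calc (∑ k ∈ Finset.range N, ‖X (k + 1) - X (k + 2)‖ ^ 2) * (μ - L)
        = 2 * ((μ - L) / 2 * ∑ k ∈ Finset.range N, ‖X (k + 1) - X (k + 2)‖ ^ 2) := by ring
      _ ≤ 2 * FF (X 1) := h5
  have hnonneg : ∀ k : ℕ, 0 ≤ ‖X (k + 1) - X (k + 2)‖ ^ 2 := fun k => by positivity
  have hsummable : Summable (fun k : ℕ => ‖X (k + 1) - X (k + 2)‖ ^ 2) :=
    summable_of_sum_range_le hnonneg hpartial
  constructor
  · exact Summable.tsum_le_of_sum_range_le hsummable hpartial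
  · -- squared differences tend to zero
    have hsq : Filter.Tendsto (fun k : ℕ => ‖X (k + 1) - X (k + 2)‖ ^ 2)
        Filter.atTop (nhds 0) := hsummable.tendsto_atTop_zero
    have hshift : Filter.Tendsto (fun k : ℕ => ‖X (k + 1) - X (k + 2)‖)
        Filter.atTop (nhds 0) := by
      have h := (Real.continuous_sqrt.tendsto 0).comp hsq
      rw [show ((fun x => Real.sqrt x) ∘ fun k : ℕ => ‖X (k + 1) - X (k + 2)‖ ^ 2)
          = fun k : ℕ => ‖X (k + 1) - X (k + 2)‖ from
        funext fun k => Real.sqrt_sq (norm_nonneg _), Real.sqrt_zero] at h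
      exact h
    have := (Filter.tendsto_add_atTop_iff_nat
      (f := fun k => ‖X k - X (k + 1)‖) (l := nhds 0) 1).mp ?_
    · exact this
    · simpa using hshift
end
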